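/- Let λ = (1^{a_1} 2^{a_2} ⋯ M^{a_M}) be a partition with largest part M, and let λ̃ be the partition obtained by rotating by 180° the complement of λ in the M × (2N+M+1) rectangle, i.e. λ̃ = (1^{a_{M-1}} 2^{a_{M-2}} ⋯ (M-1)^{a_1} M^{2N+M+1−∑a_i}). Then sp_λ(x_1,…,x_N) = (−1)^{M(M+1)/2} · sp_{λ̃}(x_1,…,x_N). -/

import Mathlib

open Matrix

lemma sign_revPerm_aux : ∀ n : ℕ,
    Equiv.Perm.sign (Fin.revPerm : Equiv.Perm (Fin n)) = (-1) ^ (n * (n-1) / 2)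
  | 0 => by
      have : (Fin.revPerm : Equiv.Perm (Fin 0)) = 1 := by
        ext i; exact absurd i.2 (by omega)
      simp [this]
  | 1 => by
      have : (Fin.revPerm : Equiv.Perm (Fin 1)) = 1 := by
        ext i; omega
      simp [this]
  | (n+2) => by
      have hdec : (Fin.revPerm : Equiv.Perm (Fin (n+2))) =
          Equiv.Perm.decomposeFin.symm (Fin.last (n+1), (finRotate (n+1))⁻¹ * Fin.revPerm) := by
        ext i
        induction i using Fin.cases with
        | zero =>
            simp [Fin.rev_zero]
        | succ x =>
            rw [Equiv.Perm.decomposeFin_symm_apply_succ]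
            simp only [Equiv.Perm.mul_apply, Fin.revPerm_apply]
            set y : Fin (n+1) := (finRotate (n+1))⁻¹ (Fin.rev x) with hy
            have hfy : finRotate (n+1) y = Fin.rev x := by
              simp [hy]
            have hval : (if y = Fin.last n then 0 else (y:ℕ) + 1) = (n+1) - ((x:ℕ) + 1) := by
              rw [← coe_finRotate, hfy, Fin.val_rev]
            by_cases hyl : y = Fin.last n
            · rw [if_pos hyl] at hval
              have hx : (x:ℕ) = n := by omega
              have hys : y.succ = Fin.last (n+1) := by
                rw [Fin.ext_iff]; simp [hyl]
              rw [hys, Equiv.swap_apply_right]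
              simp [Fin.val_rev, Fin.val_succ, hx]
            · rw [if_neg hyl] at hval
              rw [Equiv.swap_apply_of_ne_of_ne (Fin.succ_ne_zero y)
                (by simp [Fin.ext_iff, Fin.val_succ]; omega)]
              simp only [Fin.val_rev, Fin.val_succ]
              omega
      have he2 : (n+2) * (n+2-1) / 2 = (n+1) * (n+1-1) / 2 + (n+1) := by
        have hq : (n+2)*(n+2-1) = (n+1)*(n+1-1) + 2*(n+1) := by
          show (n+2)*(n+1) = (n+1)*n + 2*(n+1); ring
        have hev : Even ((n+1)*(n+1-1)) := by
          simpa [mul_comm] using Nat.even_mul_succ_self n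
        obtain ⟨k, hk⟩ := hev
        omega
      have h2 : ((-1:ℤˣ)^n)⁻¹ = (-1)^n := by
        rw [← inv_pow]; norm_num
      rw [hdec, Equiv.Perm.decomposeFin.symm_sign, _root_.map_mul, _root_.map_inv, sign_finRotate,
        sign_revPerm_aux (n+1), if_neg (by simp [Fin.ext_iff]), he2, Nat.add_sub_cancel, h2, pow_add, pow_succ]
      simp [mul_comm, mul_left_comm, mul_assoc]
  termination_by n => n

theorem sp_rectangle_complement_rotation {R : Type*} [CommRing R] (N M : ℕ) (hM : 0 < M)
    (x : Fin N → Rˣ)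
    (a : Fin M → ℕ) (haM : 1 ≤ a ⟨M - 1, by omega⟩)
    (hsum : ∑ i, a i ≤ 2 * N + M + 1)
    (s : Multiset R)
    (hs : s = (Finset.univ.val.map fun i : Fin N => (x i : R)) +
        (Finset.univ.val.map fun i : Fin N => (((x i)⁻¹ : Rˣ) : R)))
    (E : ℤ → R) (hE : ∀ m : ℤ, E m = if 0 ≤ m then s.esymm m.toNat else 0)
    (lamc lamtc : Fin M → ℕ)
    (hlamc : ∀ j : Fin M, lamc j = ∑ i ∈ Finset.univ.filter (fun i : Fin M => j ≤ i), a i)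
    (hlamtc : ∀ j : Fin M, lamtc j = 2 * N + M + 1 - lamc (Fin.rev j)) :
    det (of fun j k : Fin M =>
        E ((lamc j : ℤ) - (j : ℤ) + (k : ℤ)) - E ((lamc j : ℤ) - (j : ℤ) - (k : ℤ) - 2)) =
      (-1) ^ (M * (M + 1) / 2) *
        det (of fun j k : Fin M =>
          E ((lamtc j : ℤ) - (j : ℤ) + (k : ℤ)) -
            E ((lamtc j : ℤ) - (j : ℤ) - (k : ℤ) - 2)) := by
  classical
  -- Part 1: symmetry of elementary symmetric polynomials
  set g : (Fin N ⊕ Fin N) → Rˣ := Sum.elim x (fun i => (x i)⁻¹) with hg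
  have hs' : s = (Finset.univ : Finset (Fin N ⊕ Fin N)).val.map (fun i => ((g i : R))) := by
    rw [hs, ← Finset.univ_disjSum_univ]
    show _ = Multiset.map _ (Finset.disjSum _ _).val
    rw [Finset.val_disjSum, Multiset.disjSum, Multiset.map_add, Multiset.map_map,
      Multiset.map_map]
    rfl
  have hcard : Fintype.card (Fin N ⊕ Fin N) = 2 * N := by simp [two_mul]
  have hprod : (∏ i, g i) = 1 := by
    rw [Fintype.prod_sum_type]
    simp only [hg, Sum.elim_inl, Sum.elim_inr, ← Finset.prod_mul_distrib]
    simp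
  have hesymm : ∀ n : ℕ, s.esymm n =
      ∑ t ∈ Finset.powersetCard n Finset.univ, ∏ i ∈ t, ((g i : R)) := by
    intro n; rw [hs']; exact Finset.esymm_map_val _ _ n
  have hgσ : ∀ i, g ((Equiv.sumComm (Fin N) (Fin N)) i) = (g i)⁻¹ := by
    rintro (i | i) <;> simp [hg]
  have hprodU : ∀ (t : Finset (Fin N ⊕ Fin N)) (h : (Fin N ⊕ Fin N) → Rˣ),
      (∏ i ∈ t, ((h i : R))) = ((∏ i ∈ t, h i : Rˣ) : R) := by
    intro t h; exact (map_prod (Units.coeHom R) _ _).symm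
  have hE0 : ∀ n : ℕ, 2 * N < n → s.esymm n = 0 := by
    intro n hn
    rw [hesymm, Finset.powersetCard_eq_empty.2 (by simpa [Finset.card_univ, hcard] using hn),
      Finset.sum_empty]
  have hsym : ∀ n : ℕ, n ≤ 2 * N → s.esymm n = s.esymm (2 * N - n) := by
    intro n hn
    rw [hesymm, hesymm]
    refine Finset.sum_nbij' (fun t => tᶜ.map (Equiv.sumComm (Fin N) (Fin N)).toEmbedding)
      (fun t => (t.map (Equiv.sumComm (Fin N) (Fin N)).symm.toEmbedding)ᶜ) ?_ ?_ ?_ ?_ ?_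
    · intro t ht
      rw [Finset.mem_powersetCard_univ] at ht ⊢
      rw [Finset.card_map, Finset.card_compl, hcard, ht]
    · intro t ht
      rw [Finset.mem_powersetCard_univ] at ht ⊢
      rw [Finset.card_compl, Finset.card_map, hcard, ht]
      omega
    · intro t _
      ext i
      simp [Equiv.symm_apply_apply]
    · intro t _
      ext i
      simp
    · intro t ht
      rw [Finset.prod_map]
      simp only [Equiv.coe_toEmbedding]
      rw [Finset.prod_congr rfl (fun i _ => congrArg Units.val (hgσ i)),
        hprodU t g, hprodU tᶜ (fun i => (g i)⁻¹)]
      congr 1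
      rw [Finset.prod_inv_distrib]
      have := Finset.prod_mul_prod_compl t g
      rw [hprod] at this
      exact eq_inv_of_mul_eq_one_left (mul_comm (∏ i ∈ t, g i) _ ▸ this)
  have hE2 : ∀ m : ℤ, E m = E (2 * (N:ℤ) - m) := by
    intro m
    rw [hE, hE]
    by_cases h0 : 0 ≤ m
    · by_cases h1 : m ≤ 2 * N
      · rw [if_pos h0, if_pos (by omega)]
        rw [hsym m.toNat (by omega)]
        congr 1
        omega
      · rw [if_pos h0, if_neg (by omega)]
        exact hE0 m.toNat (by omega)
    · rw [if_neg h0, if_pos (by omega)]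
      exact (hE0 (2*(N:ℤ) - m).toNat (by omega)).symm
  -- Part 2: the matrix identity
  set A : Matrix (Fin M) (Fin M) R := of (fun j k : Fin M =>
      E ((lamc j : ℤ) - (j : ℤ) + (k : ℤ)) - E ((lamc j : ℤ) - (j : ℤ) - (k : ℤ) - 2)) with hA
  have hlam_le : ∀ j : Fin M, lamc j ≤ 2 * N + M + 1 := by
    intro j
    rw [hlamc]
    exact le_trans (Finset.sum_le_sum_of_subset (Finset.filter_subset _ _)) hsum
  have hBA : (of fun j k : Fin M =>
      E ((lamtc j : ℤ) - (j : ℤ) + (k : ℤ)) - E ((lamtc j : ℤ) - (j : ℤ) - (k : ℤ) - 2))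
      = - (A.submatrix (⇑(Fin.revPerm : Equiv.Perm (Fin M))) id) := by
    funext j k
    have hrevv : ((Fin.rev j : Fin M) : ℕ) = M - ((j:ℕ) + 1) := Fin.val_rev j
    have hjlt := j.isLt
    have hrev : (((Fin.rev j : Fin M) : ℕ) : ℤ) = (M:ℤ) - 1 - ((j:ℕ):ℤ) := by omega
    have hcast : ((lamtc j : ℕ) : ℤ) = 2*(N:ℤ) + M + 1 - ((lamc (Fin.rev j) : ℕ) : ℤ) := by
      rw [hlamtc]
      have := hlam_le (Fin.rev j)
      push_cast [Nat.cast_sub this]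
      ring
    have h1 : ((lamtc j : ℕ) : ℤ) - (j : ℤ) + (k : ℤ) =
        2 * (N:ℤ) - (((lamc (Fin.rev j) : ℕ) : ℤ) - ((Fin.rev j : Fin M) : ℤ) - (k : ℤ) - 2) := by
      rw [hcast, hrev]; ring
    have h2 : ((lamtc j : ℕ) : ℤ) - (j : ℤ) - (k : ℤ) - 2 =
        2 * (N:ℤ) - (((lamc (Fin.rev j) : ℕ) : ℤ) - ((Fin.rev j : Fin M) : ℤ) + (k : ℤ)) := by
      rw [hcast, hrev]; ring
    show (E ((lamtc j : ℤ) - (j : ℤ) + (k : ℤ)) - E ((lamtc j : ℤ) - (j : ℤ) - (k : ℤ) - 2)) = _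
    rw [h1, h2, ← hE2, ← hE2]
    simp only [Matrix.neg_apply, Matrix.submatrix_apply, Fin.revPerm_apply, hA, Matrix.of_apply,
      id_eq]
    ring
  rw [hBA, Matrix.det_neg, Matrix.det_permute, sign_revPerm_aux]
  have hunits : ((((-1:ℤˣ) ^ (M * (M-1) / 2) : ℤˣ) : ℤ) : R) = (-1 : R) ^ (M * (M-1) / 2) := by
    push_cast
    simp
  rw [hunits, Fintype.card_fin]
  have hkey : Even (M*(M+1)/2 + (M + M*(M-1)/2)) := by
    have h1 : M*(M+1) = M*M + M := by ring
    have h2 : M*(M-1) + M = M*M := by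
      cases M with
      | zero => rfl
      | succ m =>
          show (m+1)*(m+1-1) + (m+1) = _
          simp only [Nat.add_sub_cancel]
          ring
    obtain ⟨p, hp⟩ := Nat.even_mul_succ_self M
    rw [Nat.even_iff]
    omega
  have hone : ((-1:R) ^ (M * (M + 1) / 2)) * ((-1:R) ^ M * (-1:R) ^ (M * (M-1) / 2)) = 1 := by
    rw [← pow_add, ← pow_add]
    exact Even.neg_one_pow hkey
  calc A.det = 1 * A.det := (one_mul _).symm
    _ = ((-1:R) ^ (M * (M + 1) / 2)) * ((-1:R) ^ M * (-1:R) ^ (M * (M-1) / 2)) * A.det := by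
        rw [hone]
    _ = (-1) ^ (M * (M + 1) / 2) *
        ((-1) ^ M * ((-1) ^ (M * (M-1) / 2) * A.det)) := by ring
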